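/- Let B_0,…,B_N be complex d×d matrices whose characteristic polynomial factors as F(μ) = μ^e g(μ) with e ∈ ℕ and g a polynomial with g(0) ≠ 0, and let λ = (λ_1,…,λ_m) be a stable non-resonant vector of eigenvalues for B_0,…,B_N, none of whose entries is zero. Suppose 0 < μ ≤ min{|λ_1|^e, …, |λ_m|^e}. Then there exists a constant C > 0 such that for every multi-index α ∈ ℕ^m with |α| ≥ 2, the matrix T(λ^α) is invertible and μ^{|α|} ‖T(λ^α)⁻¹‖ ≤ C. -/

import Mathlib

open Finset

/-- `T(μ) = Σ_{i=0}^N μ^i B_i`. -/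
noncomputable def linT {d : ℕ} (N : ℕ) (B : ℕ → Matrix (Fin d) (Fin d) ℂ) (μ : ℂ) :
    Matrix (Fin d) (Fin d) ℂ :=
  ∑ i ∈ Finset.range (N + 1), μ ^ i • B i

/-- The characteristic polynomial `F(μ) = det T(μ)`. -/
noncomputable def charF {d : ℕ} (N : ℕ) (B : ℕ → Matrix (Fin d) (Fin d) ℂ) (μ : ℂ) : ℂ :=
  (linT N B μ).det

/-- `λ^α = λ₁^{α₁} ⋯ λ_m^{α_m}` for a multi-index `α ∈ ℕ^m`. -/
def mIdxPow {m : ℕ} (lam : Fin m → ℂ) (α : Fin m → ℕ) : ℂ :=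
  ∏ j, lam j ^ α j

/-- `|α| = α₁ + ⋯ + α_m`. -/
def mIdxSize {m : ℕ} (α : Fin m → ℕ) : ℕ :=
  ∑ j, α j

/-- `λ = (λ₁,…,λ_m)` is a stable non-resonant vector of eigenvalues for
`B_0,…,B_N` : each `|λ_j| < 1` with `F(λ_j) = 0`, and `F(λ^α) ≠ 0` for every
multi-index `α` with `|α| ≥ 2`. -/
def StableNonResonant {d m : ℕ} (N : ℕ) (B : ℕ → Matrix (Fin d) (Fin d) ℂ)
    (lam : Fin m → ℂ) : Prop :=
  (∀ j, ‖lam j‖ < 1 ∧ charF N B (lam j) = 0) ∧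
  ∀ α : Fin m → ℕ, 2 ≤ mIdxSize α → charF N B (mIdxPow lam α) ≠ 0

/-- Operator norm of a complex matrix, acting by `mulVec` on `ℂ^d` with the
sup norm. -/
noncomputable def matOpNorm {d : ℕ} (M : Matrix (Fin d) (Fin d) ℂ) : ℝ :=
  ‖LinearMap.toContinuousLinearMap (Matrix.mulVecLin M)‖

/-- Auxiliary: `M ↦ toCLM (mulVecLin M)` as a linear map. -/
noncomputable def matL (d : ℕ) :
    Matrix (Fin d) (Fin d) ℂ →ₗ[ℂ] ((Fin d → ℂ) →L[ℂ] (Fin d → ℂ)) where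
  toFun M := LinearMap.toContinuousLinearMap (Matrix.mulVecLin M)
  map_add' M N := by ext v i; simp [Matrix.add_mulVec]
  map_smul' c M := by ext v i; simp [Matrix.smul_mulVec]

lemma matOpNorm_eq {d : ℕ} (M : Matrix (Fin d) (Fin d) ℂ) :
    matOpNorm M = ‖matL d M‖ := rfl

lemma matOpNorm_smul {d : ℕ} (c : ℂ) (M : Matrix (Fin d) (Fin d) ℂ) :
    matOpNorm (c • M) = ‖c‖ * matOpNorm M := by
  rw [matOpNorm_eq, matOpNorm_eq, map_smul]
  have := norm_smul c (matL d M)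
  rw [this]

lemma matOpNorm_nonneg {d : ℕ} (M : Matrix (Fin d) (Fin d) ℂ) : 0 ≤ matOpNorm M :=
  norm_nonneg _

lemma cont_adj {d N : ℕ} (B : ℕ → Matrix (Fin d) (Fin d) ℂ) :
    Continuous fun z : ℂ => matOpNorm (Matrix.adjugate (linT N B z)) := by
  have h1 : Continuous fun z : ℂ => linT N B z :=
    continuous_finset_sum _ fun i _ => (continuous_pow i).smul continuous_const
  exact (((matL d).continuous_of_finiteDimensional).comp h1.matrix_adjugate).norm

/-- Singular case, dilation bound: if `F(μ) = μ^e g(μ)` with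
`g(0) ≠ 0`, `λ` a stable non-resonant vector of eigenvalues with nonzero
entries, and `0 < μ ≤ min_j |λ_j|^e`, then there is `C > 0` such that
`T(λ^α)` is invertible and `μ^{|α|} ‖T(λ^α)⁻¹‖ ≤ C` whenever `|α| ≥ 2`. -/
theorem singular_dilation_bound {d m N : ℕ}
    (B : ℕ → Matrix (Fin d) (Fin d) ℂ)
    (e : ℕ) (g : Polynomial ℂ) (hg0 : g.eval 0 ≠ 0)
    (hfac : ∀ z : ℂ, charF N B z = z ^ e * g.eval z)
    (lam : Fin m → ℂ) (hlam : StableNonResonant N B lam)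
    (hne : ∀ j, lam j ≠ 0)
    (μ : ℝ) (hμ : 0 < μ) (hμle : ∀ j, μ ≤ ‖lam j‖ ^ e) :
    ∃ C : ℝ, 0 < C ∧ ∀ α : Fin m → ℕ, 2 ≤ mIdxSize α →
      IsUnit (linT N B (mIdxPow lam α)) ∧
      μ ^ (mIdxSize α) * matOpNorm (linT N B (mIdxPow lam α))⁻¹ ≤ C := by
  rcases Nat.eq_zero_or_pos m with hm | hm
  · refine ⟨1, one_pos, fun α hα => absurd hα ?_⟩
    subst hm
    simp [mIdxSize]
  haveI : Nonempty (Fin m) := ⟨⟨0, hm⟩⟩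
  -- the maximal modulus ρ < 1
  set ρ : ℝ := univ.sup' univ_nonempty (fun j => ‖lam j‖) with hρdef
  have hj : ∀ j, ‖lam j‖ ≤ ρ := fun j => by
    rw [hρdef]; exact Finset.le_sup' (fun j => ‖lam j‖) (mem_univ j)
  have hρlt : ρ < 1 := (Finset.sup'_lt_iff _).mpr fun j _ => (hlam.1 j).1
  have hρ0 : 0 ≤ ρ := (norm_nonneg _).trans (hj ⟨0, hm⟩)
  -- basic facts about λ^α
  have hzne : ∀ α : Fin m → ℕ, mIdxPow lam α ≠ 0 := fun α =>
    Finset.prod_ne_zero_iff.mpr fun j _ => pow_ne_zero _ (hne j)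
  have habs : ∀ α : Fin m → ℕ, ‖mIdxPow lam α‖ ≤ ρ ^ mIdxSize α := by
    intro α
    have h1 : ‖mIdxPow lam α‖ = ∏ j, ‖lam j‖ ^ α j := by
      simp [mIdxPow, norm_prod, norm_pow]
    rw [h1, mIdxSize, ← Finset.prod_pow_eq_pow_sum]
    exact Finset.prod_le_prod (fun j _ => pow_nonneg (norm_nonneg _) _)
      (fun j _ => pow_le_pow_left₀ (norm_nonneg _) (hj j) _)
  have hmun : ∀ α : Fin m → ℕ, μ ^ mIdxSize α ≤ ‖mIdxPow lam α‖ ^ e := by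
    intro α
    have h1 : ‖mIdxPow lam α‖ ^ e = ∏ j, (‖lam j‖ ^ e) ^ α j := by
      rw [show ‖mIdxPow lam α‖ = ∏ j, ‖lam j‖ ^ α j by
        simp [mIdxPow, norm_prod, norm_pow], ← Finset.prod_pow]
      exact Finset.prod_congr rfl fun j _ => by rw [← pow_mul, ← pow_mul, Nat.mul_comm]
    rw [h1, mIdxSize, ← Finset.prod_pow_eq_pow_sum]
    exact Finset.prod_le_prod (fun j _ => pow_nonneg hμ.le _)
      (fun j _ => pow_le_pow_left₀ hμ.le (hμle j) _)
  have hgne : ∀ α : Fin m → ℕ, 2 ≤ mIdxSize α → Polynomial.eval (mIdxPow lam α) g ≠ 0 := by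
    intro α hα hg
    exact hlam.2 α hα (by rw [hfac, hg, mul_zero])
  -- bound on the adjugate over the closed unit ball
  obtain ⟨z₀, hz₀, hA⟩ := (isCompact_closedBall (0:ℂ) 1).exists_isMaxOn
    ⟨0, Metric.mem_closedBall_self zero_le_one⟩ (cont_adj B).continuousOn
  set A : ℝ := matOpNorm (Matrix.adjugate (linT N B z₀)) with hAdef
  have hA0 : 0 ≤ A := matOpNorm_nonneg _
  -- lower bound c on |g| near 0
  have hgabs : 0 < ‖g.eval 0‖ := norm_pos_iff.mpr hg0
  have hev : ∀ᶠ z in nhds (0:ℂ), ‖g.eval 0‖ / 2 < ‖g.eval z‖ := by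
    have hc : ContinuousAt (fun z => ‖g.eval z‖) 0 :=
      (continuous_norm.comp g.continuous).continuousAt
    exact hc (lt_mem_nhds (half_lt_self hgabs))
  obtain ⟨δ, hδ0, hδ⟩ := Metric.eventually_nhds_iff_ball.mp hev
  obtain ⟨M, hM⟩ := exists_pow_lt_of_lt_one hδ0 hρlt
  -- finitely many exceptional multi-indices
  set S : Finset (Fin m → ℕ) :=
    (Fintype.piFinset fun _ => Finset.range (M+1)).filter fun α => 2 ≤ mIdxSize α with hSdef
  set V : Finset ℝ := insert 1 (S.image fun α => ‖g.eval (mIdxPow lam α)‖)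
    with hVdef
  set ε₂ : ℝ := V.min' (insert_nonempty _ _) with hε₂def
  have hε₂pos : 0 < ε₂ := by
    rw [hε₂def]
    refine (Finset.lt_min'_iff _ _).mpr fun b hb => ?_
    rcases Finset.mem_insert.mp hb with h1 | h2
    · rw [h1]; exact one_pos
    · obtain ⟨α, hαS, hαb⟩ := Finset.mem_image.mp h2
      have hα2 : 2 ≤ mIdxSize α := (Finset.mem_filter.mp hαS).2
      rw [← hαb]
      exact norm_pos_iff.mpr (hgne α hα2)
  set ε : ℝ := min ε₂ (‖g.eval 0‖ / 2) with hεdef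
  have hεpos : 0 < ε := lt_min hε₂pos (half_pos hgabs)
  have key : ∀ α : Fin m → ℕ, 2 ≤ mIdxSize α →
      ε ≤ ‖g.eval (mIdxPow lam α)‖ := by
    intro α hα
    by_cases hle : mIdxSize α ≤ M
    · have hαS : α ∈ S := by
        refine Finset.mem_filter.mpr ⟨Fintype.mem_piFinset.mpr fun j => ?_, hα⟩
        refine Finset.mem_range.mpr (Nat.lt_succ_of_le ?_)
        exact le_trans (Finset.single_le_sum (fun i _ => Nat.zero_le _) (mem_univ j)) hle
      refine le_trans (min_le_left _ _) ?_
      exact Finset.min'_le _ _ (Finset.mem_insert_of_mem (Finset.mem_image_of_mem _ hαS))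
    · have hMle : M ≤ mIdxSize α := le_of_not_ge hle
      have hball : mIdxPow lam α ∈ Metric.ball (0:ℂ) δ := by
        rw [Metric.mem_ball, dist_zero_right]
        exact lt_of_le_of_lt (le_trans (habs α)
          (pow_le_pow_of_le_one hρ0 hρlt.le hMle)) hM
      exact le_trans (min_le_right _ _) (hδ _ hball).le
  -- the constant
  refine ⟨A / ε + 1, by positivity, fun α hα => ?_⟩
  set z : ℂ := mIdxPow lam α with hzdef
  have hdet : (linT N B z).det = z ^ e * g.eval z := hfac z
  have hdetne : (linT N B z).det ≠ 0 := hlam.2 α hα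
  have hU : IsUnit (linT N B z) :=
    (Matrix.isUnit_iff_isUnit_det _).mpr (isUnit_iff_ne_zero.mpr hdetne)
  refine ⟨hU, ?_⟩
  have hinv : (linT N B z)⁻¹ = ((linT N B z).det)⁻¹ • Matrix.adjugate (linT N B z) := by
    rw [Matrix.inv_def, Ring.inverse_eq_inv']
  have hz1 : ‖z‖ ≤ 1 :=
    le_trans (habs α) (pow_le_one₀ hρ0 hρlt.le)
  have hadjA : matOpNorm (Matrix.adjugate (linT N B z)) ≤ A := by
    refine hA ?_
    rw [Metric.mem_closedBall, dist_zero_right]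
    exact hz1
  have hzP : (0:ℝ) < ‖z‖ ^ e := pow_pos (norm_pos_iff.mpr (hzne α)) _
  have hG : ε ≤ ‖g.eval z‖ := key α hα
  have hdetabs : ‖(linT N B z).det‖
      = ‖z‖ ^ e * ‖g.eval z‖ := by
    rw [hdet, norm_mul, norm_pow]
  rw [hinv, matOpNorm_smul, norm_inv, hdetabs]
  have hGpos : 0 < ‖g.eval z‖ := lt_of_lt_of_le hεpos hG
  have step1 : μ ^ mIdxSize α * ((‖z‖ ^ e * ‖g.eval z‖)⁻¹ *
      matOpNorm (Matrix.adjugate (linT N B z)))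
      ≤ ‖z‖ ^ e * ((‖z‖ ^ e * ‖g.eval z‖)⁻¹ * A) := by
    have hinvpos : (0:ℝ) ≤ (‖z‖ ^ e * ‖g.eval z‖)⁻¹ :=
      inv_nonneg.mpr (by positivity)
    exact mul_le_mul (hmun α) (mul_le_mul_of_nonneg_left hadjA hinvpos)
      (mul_nonneg hinvpos (matOpNorm_nonneg _)) hzP.le
  refine le_trans step1 (le_trans ?_ (le_add_of_nonneg_right zero_le_one))
  have heq : ‖z‖ ^ e * ((‖z‖ ^ e * ‖g.eval z‖)⁻¹ * A)
      = A / ‖g.eval z‖ := by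
    field_simp
  rw [heq]
  gcongr
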